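/- Let u : ℝ² → ℝ² be continuous on the closed unit disk D̄, continuously differentiable on D̄ \ {0}, and circularly symmetric, i.e. u(R_θ x) = R_θ u(x) for every rotation R_θ of ℝ² and every x ∈ D̄. If moreover div u = 0 on D \ {0}, then there is a function s : (0,1] → ℝ such that u(x) = s(‖x‖)·x^⊥ for all x ∈ D̄ \ {0}, and u(0) = 0. -/

import Mathlib

open Metric Set MeasureTheory Filter Real
open scoped RealInnerProductSpace MeasureTheory

noncomputable section

/-- The plane `ℝ²`, as a Euclidean space. -/
abbrev E2 := EuclideanSpace ℝ (Fin 2)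

/-- Counterclockwise rotation of `x` by `90°`:  `x^⊥ = (-x₂, x₁)`. -/
def perp (x : E2) : E2 := !₂[-(x 1), x 0]

/-- Counterclockwise rotation of the plane by the angle `θ`. -/
def rot2 (θ : ℝ) (x : E2) : E2 :=
  !₂[Real.cos θ * x 0 - Real.sin θ * x 1, Real.sin θ * x 0 + Real.cos θ * x 1]

lemma E2_ext {v w : E2} (h0 : v 0 = w 0) (h1 : v 1 = w 1) : v = w := by
  apply PiLp.ext; intro i; fin_cases i; exacts [h0, h1]

lemma rot2_apply0 (θ : ℝ) (x : E2) :
    rot2 θ x 0 = Real.cos θ * x 0 - Real.sin θ * x 1 := rfl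

lemma rot2_apply1 (θ : ℝ) (x : E2) :
    rot2 θ x 1 = Real.sin θ * x 0 + Real.cos θ * x 1 := rfl

lemma e0_apply0 : (EuclideanSpace.single (0 : Fin 2) (1:ℝ)) 0 = 1 := by
  simp [EuclideanSpace.single_apply]

lemma e0_apply1 : (EuclideanSpace.single (0 : Fin 2) (1:ℝ)) 1 = 0 := by
  simp [EuclideanSpace.single_apply]

lemma smul_e0_apply0 (r : ℝ) : (r • EuclideanSpace.single (0 : Fin 2) (1:ℝ)) 0 = r := by
  simp [EuclideanSpace.single_apply]

lemma smul_e0_apply1 (r : ℝ) : (r • EuclideanSpace.single (0 : Fin 2) (1:ℝ)) 1 = 0 := by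
  simp [EuclideanSpace.single_apply]

lemma norm_smul_e0 (r : ℝ) (hr : 0 ≤ r) :
    ‖r • EuclideanSpace.single (0 : Fin 2) (1:ℝ)‖ = r := by
  rw [norm_smul, EuclideanSpace.norm_single]
  simp [Real.norm_eq_abs, abs_of_nonneg hr]

/-- If `u` is continuous on the closed unit disk, continuously differentiable on
`D̄ \ {0}`, circularly symmetric, and divergence free on `D \ {0}`, then
`u x = s(‖x‖) • x^⊥` on `D̄ \ {0}` for some `s : (0,1] → ℝ`, and `u 0 = 0`. -/
theorem stmt0 (u : E2 → E2)
    (hcont : ContinuousOn u (closedBall 0 1))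
    (hC1 : ContDiffOn ℝ 1 u (closedBall 0 1 \ {0}))
    (hsym : ∀ θ : ℝ, ∀ x ∈ closedBall (0:E2) 1, u (rot2 θ x) = rot2 θ (u x))
    (hdiv : ∀ x ∈ ball (0:E2) 1 \ {0},
      fderiv ℝ u x (EuclideanSpace.single 0 1) 0
        + fderiv ℝ u x (EuclideanSpace.single 1 1) 1 = 0) :
    (∃ s : ℝ → ℝ, ∀ x ∈ closedBall (0:E2) 1 \ {0}, u x = s ‖x‖ • perp x) ∧ u 0 = 0 := by
  set e0 : E2 := EuclideanSpace.single 0 1 with he0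
  set e1 : E2 := EuclideanSpace.single 1 1 with he1
  -- u 0 = 0
  have hu0 : u 0 = 0 := by
    have h0mem : (0 : E2) ∈ closedBall (0:E2) 1 := mem_closedBall_self (by norm_num)
    have hrot0 : rot2 π (0 : E2) = 0 := by
      apply E2_ext <;> simp [rot2_apply0, rot2_apply1]
    have h := hsym π 0 h0mem
    rw [hrot0] at h
    apply E2_ext
    · have := congrArg (fun v : E2 => v 0) h
      rw [rot2_apply0] at this
      simp at this ⊢; linarith
    · have := congrArg (fun v : E2 => v 1) h
      rw [rot2_apply1] at this
      simp at this ⊢; linarith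
  -- the radial component
  set f : ℝ → ℝ := fun ρ => u (ρ • e0) 0 with hfdef
  have hmemcb : ∀ ρ : ℝ, 0 ≤ ρ → ρ ≤ 1 → ρ • e0 ∈ closedBall (0:E2) 1 := by
    intro ρ h0 h1
    rw [mem_closedBall_zero_iff, he0, norm_smul_e0 ρ h0]; exact h1
  -- continuity of ρ ↦ u (ρ • e0) on [0,1]
  have hcurve : Continuous (fun ρ : ℝ => ρ • e0) := by continuity
  have hUc : ContinuousOn (fun ρ : ℝ => u (ρ • e0)) (Icc 0 1) := by
    apply hcont.comp hcurve.continuousOn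
    intro ρ hρ; exact hmemcb ρ hρ.1 hρ.2
  have hfc : ContinuousOn f (Icc 0 1) := by
    exact (EuclideanSpace.proj (0 : Fin 2)).continuous.comp_continuousOn hUc
  -- derivative of t ↦ t * f t is 0 on (0,1)
  have hFd : ∀ ρ ∈ Ioo (0:ℝ) 1, HasDerivAt (fun t => t * f t) 0 ρ := by
    intro ρ hρ
    set x : E2 := ρ • e0 with hx
    have hxcb : x ∈ closedBall (0:E2) 1 := hmemcb ρ hρ.1.le hρ.2.le
    have hxne : x ≠ 0 := by
      intro h
      have := congrArg (fun v : E2 => v 0) h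
      rw [hx, he0, smul_e0_apply0] at this
      simp at this; exact absurd this (ne_of_gt hρ.1)
    have hxball : x ∈ ball (0:E2) 1 \ {0} := by
      constructor
      · rw [mem_ball_zero_iff, hx, he0, norm_smul_e0 ρ hρ.1.le]; exact hρ.2
      · simpa using hxne
    have hnhds : closedBall (0:E2) 1 \ {0} ∈ nhds x := by
      have hopen : IsOpen (ball (0:E2) 1 \ {0}) := isOpen_ball.sdiff isClosed_singleton
      exact Filter.mem_of_superset (hopen.mem_nhds hxball)
        (diff_subset_diff_left ball_subset_closedBall)
    have hdiffAt : DifferentiableAt ℝ u x :=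
      ((hC1.contDiffAt hnhds).differentiableAt one_ne_zero)
    have hder := hdiffAt.hasFDerivAt
    -- circle curve and its derivative
    have hγeq : (fun θ : ℝ => rot2 θ x) =
        fun θ : ℝ => (ρ * Real.cos θ) • e0 + (ρ * Real.sin θ) • e1 := by
      funext θ
      apply E2_ext
      · rw [rot2_apply0]
        simp [hx, he0, he1, EuclideanSpace.single_apply]
        ring
      · rw [rot2_apply1]
        simp [hx, he0, he1, EuclideanSpace.single_apply]
        ring
    have hγ : HasDerivAt (fun θ : ℝ => rot2 θ x) (ρ • e1) 0 := by
      rw [hγeq]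
      have h1 : HasDerivAt (fun θ : ℝ => (ρ * Real.cos θ) • e0)
          ((ρ * (-Real.sin 0)) • e0) 0 :=
        ((Real.hasDerivAt_cos 0).const_mul ρ).smul_const e0
      have h2 : HasDerivAt (fun θ : ℝ => (ρ * Real.sin θ) • e1)
          ((ρ * Real.cos 0) • e1) 0 :=
        ((Real.hasDerivAt_sin 0).const_mul ρ).smul_const e1
      have := h1.add h2
      simpa [Pi.add_def] using this
    have hγ0 : (fun θ : ℝ => rot2 θ x) 0 = x := by
      show rot2 0 x = x
      apply E2_ext
      · rw [rot2_apply0]; simp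
      · rw [rot2_apply1]; simp
    have hcomp : HasDerivAt (fun θ : ℝ => u (rot2 θ x)) (fderiv ℝ u x (ρ • e1)) 0 := by
      have hder' : HasFDerivAt u (fderiv ℝ u x) ((fun θ : ℝ => rot2 θ x) 0) := by
        rw [hγ0]; exact hder
      exact hder'.comp_hasDerivAt 0 hγ
    have hproj : HasDerivAt (fun θ : ℝ => u (rot2 θ x) 1) ((fderiv ℝ u x (ρ • e1)) 1) 0 := by
      have := HasFDerivAt.comp_hasDerivAt 0
        ((EuclideanSpace.proj (1 : Fin 2)).hasFDerivAt) hcomp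
      exact this
    have heq2 : (fun θ : ℝ => u (rot2 θ x) 1) =
        fun θ : ℝ => Real.sin θ * (u x 0) + Real.cos θ * (u x 1) := by
      funext θ
      rw [hsym θ x hxcb, rot2_apply1]
    have hrhs : HasDerivAt (fun θ : ℝ => Real.sin θ * (u x 0) + Real.cos θ * (u x 1))
        (u x 0) 0 := by
      have h1 := ((Real.hasDerivAt_sin 0).mul_const (u x 0)).add
        ((Real.hasDerivAt_cos 0).mul_const (u x 1))
      simpa [Pi.add_def] using h1
    rw [heq2] at hproj
    have hkey : (fderiv ℝ u x (ρ • e1)) 1 = u x 0 := hproj.unique hrhs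
    have hkey2 : ρ * ((fderiv ℝ u x e1) 1) = f ρ := by
      have : fderiv ℝ u x (ρ • e1) = ρ • (fderiv ℝ u x e1) :=
        (fderiv ℝ u x).map_smul ρ e1
      rw [this] at hkey
      rw [hfdef]
      simpa using hkey
    -- derivative of f
    have hcurve2 : HasDerivAt (fun t : ℝ => t • e0) e0 ρ := by
      have := (hasDerivAt_id ρ).smul_const e0
      simpa using this
    have hfd : HasDerivAt f ((fderiv ℝ u x e0) 0) ρ := by
      have hc := HasFDerivAt.comp_hasDerivAt ρ hder hcurve2
      have := HasFDerivAt.comp_hasDerivAt ρ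
        ((EuclideanSpace.proj (0 : Fin 2)).hasFDerivAt) hc
      exact this
    have hdiveq := hdiv x hxball
    have hF := (hasDerivAt_id ρ).mul hfd
    have hval : (1 : ℝ) * f ρ + id ρ * (fderiv ℝ u x e0) 0 = 0 := by
      have h2 : (fderiv ℝ u x) e1 1 = -((fderiv ℝ u x) e0 0) := by linarith [hdiveq]
      rw [id_eq, one_mul, ← hkey2, h2]; ring
    rw [hval] at hF
    simpa [id_eq, Pi.mul_def] using hF
  -- limit of t * f t at 0⁺ is 0
  have hlim : Tendsto (fun t : ℝ => t * f t) (nhdsWithin 0 (Ioi 0)) (nhds 0) := by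
    have htendx : Tendsto (fun ρ : ℝ => ρ • e0) (nhdsWithin 0 (Ioi 0))
        (nhdsWithin 0 (closedBall (0:E2) 1)) := by
      apply tendsto_nhdsWithin_of_tendsto_nhds_of_eventually_within
      · have := hcurve.tendsto 0
        simpa using this.mono_left nhdsWithin_le_nhds
      · filter_upwards [Ioo_mem_nhdsGT_of_mem (by constructor <;> norm_num :
          (0:ℝ) ∈ Ico 0 1)] with ρ hρ
        exact hmemcb ρ hρ.1.le hρ.2.le
    have hUt : Tendsto (fun ρ : ℝ => u (ρ • e0)) (nhdsWithin 0 (Ioi 0)) (nhds 0) := by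
      have h0cb : (0:E2) ∈ closedBall (0:E2) 1 := mem_closedBall_self (by norm_num)
      have := (hcont 0 h0cb).tendsto.comp htendx
      rwa [hu0] at this
    have hft : Tendsto f (nhdsWithin 0 (Ioi 0)) (nhds 0) := by
      have := ((EuclideanSpace.proj (0 : Fin 2)).continuous.tendsto 0).comp hUt
      simpa [hfdef, Function.comp_def] using this
    have hid : Tendsto (fun t : ℝ => t) (nhdsWithin 0 (Ioi 0)) (nhds 0) :=
      tendsto_id.mono_left nhdsWithin_le_nhds
    have := hid.mul hft
    simpa using this
  -- f vanishes on (0,1]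
  have hf0 : ∀ ρ : ℝ, 0 < ρ → ρ ≤ 1 → f ρ = 0 := by
    intro b hb0 hb1
    have hFb : ∀ a ∈ Ioo (0:ℝ) b, a * f a = b * f b := by
      intro a ha
      obtain ⟨c, hc, hc'⟩ := exists_hasDerivAt_eq_slope (fun t => t * f t) (fun _ => 0)
        ha.2 (continuousOn_id.mul (hfc.mono
          (fun t ht => ⟨le_trans ha.1.le ht.1, le_trans ht.2 hb1⟩)))
        (by
          intro t ht
          exact hFd t ⟨lt_trans ha.1 ht.1, lt_of_lt_of_le ht.2 hb1⟩)
      have hba : b - a ≠ 0 := by linarith [ha.2]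
      field_simp at hc'
      linarith [hc']
    have h1 : Tendsto (fun t : ℝ => t * f t) (nhdsWithin 0 (Ioi 0)) (nhds (b * f b)) := by
      apply Tendsto.congr' _ tendsto_const_nhds
      filter_upwards [Ioo_mem_nhdsGT_of_mem (⟨le_refl 0, hb0⟩ : (0:ℝ) ∈ Ico 0 b)] with a ha
      exact (hFb a ha).symm
    have := tendsto_nhds_unique h1 hlim
    exact (mul_eq_zero.mp this).resolve_left (ne_of_gt hb0)
  -- assemble
  refine ⟨⟨fun r => u (r • e0) 1 / r, ?_⟩, hu0⟩
  intro x hx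
  obtain ⟨hxcb, hxne⟩ := hx
  have hxne' : x ≠ 0 := by simpa using hxne
  set r : ℝ := ‖x‖ with hrdef
  have hr0 : 0 < r := norm_pos_iff.mpr hxne'
  have hr1 : r ≤ 1 := mem_closedBall_zero_iff.mp hxcb
  set z : ℂ := ⟨x 0, x 1⟩ with hzdef
  have hzne : z ≠ 0 := by
    intro h
    apply hxne'
    apply E2_ext
    · simpa using congrArg Complex.re h
    · simpa using congrArg Complex.im h
  have habs : ‖z‖ = r := by
    rw [Complex.norm_def, Complex.normSq_apply, hrdef, EuclideanSpace.norm_eq]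
    congr 1
    rw [Fin.sum_univ_two]
    simp [hzdef, Real.norm_eq_abs, sq_abs]
    ring
  set θ : ℝ := Complex.arg z with hθ
  have hcos : Real.cos θ = x 0 / r := by
    rw [hθ, Complex.cos_arg hzne, habs]
  have hsin : Real.sin θ = x 1 / r := by
    rw [hθ, Complex.sin_arg, habs]
  have hre0 : r • e0 ∈ closedBall (0:E2) 1 := hmemcb r hr0.le hr1
  have hxeq : rot2 θ (r • e0) = x := by
    apply E2_ext
    · rw [rot2_apply0, he0, smul_e0_apply0, smul_e0_apply1, hcos, hsin]
      field_simp
      ring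
    · rw [rot2_apply1, he0, smul_e0_apply0, smul_e0_apply1, hcos, hsin]
      field_simp
      ring
  have hux : u x = rot2 θ (u (r • e0)) := by
    rw [← hxeq, hsym θ _ hre0]
  have hv0 : u (r • e0) 0 = 0 := hf0 r hr0 hr1
  rw [hux]
  apply E2_ext
  · rw [rot2_apply0, hv0, hcos, hsin]
    simp only [PiLp.smul_apply, smul_eq_mul, perp]
    simp only [Matrix.cons_val_zero]
    ring
  · rw [rot2_apply1, hv0, hcos, hsin]
    simp only [PiLp.smul_apply, smul_eq_mul, perp]
    simp only [Matrix.cons_val_one, Matrix.head_cons, Matrix.cons_val_zero]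
    ring
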